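/- arXiv:1602.04605 — 2 statements merged into one kernel-verified Lean document; each statement's English description precedes it below -/
import Mathlib

section
/- (Two-source outer bound, Theorem 1, part R ⊆ R_o.) For every achievable triple (μ, R1, R2) there exist finitely supported random variables U and V, jointly distributed with (X, Z), such that U–X–Z and X–Z–V are Markov chains and R1 ≥ I(U; X), R2 ≥ I(V; Z), and μ ≤ I(U; X) + I(V; Z) − I((U,V); (X,Z)). -/
open scoped BigOperators Classical

namespace Biclustering

variable {α β γ σ : Type*}

/-- A probability mass function on a finite type. -/
def IsPMF [Fintype α] (p : α → ℝ) : Prop := (∀ a, 0 ≤ p a) ∧ ∑ a, p a = 1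

/-- Shannon entropy (in nats) of a pmf on a finite type. -/
noncomputable def ent [Fintype α] (p : α → ℝ) : ℝ := - ∑ a, p a * Real.log (p a)

/-- Pushforward (distribution of `f` under `p`). -/
noncomputable def pmap [Fintype α] (f : α → β) (p : α → ℝ) : β → ℝ :=
  fun b => ∑ a, if f a = b then p a else 0

/-- Entropy of the random variable `f` under the joint pmf `p`. -/
noncomputable def Hof [Fintype α] [Fintype β] (p : α → ℝ) (f : α → β) : ℝ := ent (pmap f p)

/-- Mutual information `I(f; g)` under the joint pmf `p`. -/
noncomputable def MI [Fintype α] [Fintype β] [Fintype γ] (p : α → ℝ) (f : α → β) (g : α → γ) : ℝ :=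
  Hof p f + Hof p g - Hof p (fun a => (f a, g a))

/-- `f` and `g` are conditionally independent given `m` (a Markov chain `f – m – g`). -/
def CondIndep [Fintype α] (p : α → ℝ) (f : α → β) (g : α → γ) (m : α → σ) : Prop :=
  ∀ b c s, pmap (fun a => (f a, g a, m a)) p (b, c, s) * pmap m p s
    = pmap (fun a => (f a, m a)) p (b, s) * pmap (fun a => (g a, m a)) p (c, s)

/-- The pmf of `n` i.i.d. copies of a source with pmf `p`. -/
noncomputable def iid [Fintype α] (n : ℕ) (p : α → ℝ) : (Fin n → α) → ℝ :=
  fun x => ∏ i, p (x i)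

variable {𝒳 𝒵 : Type}

/-- `(μ, R1, R2)` is achievable for the two-source biclustering problem with source pmf `p`:
for some blocklength `n` there is an `(n, R1, R2)` code `(f, g)` whose normalized
co-information is at least `μ`. -/
def Achievable [Fintype 𝒳] [Fintype 𝒵] (p : 𝒳 × 𝒵 → ℝ) (μ R1 R2 : ℝ) : Prop :=
  ∃ (n M1 M2 : ℕ), 0 < n ∧
    Real.log M1 ≤ n * R1 ∧ Real.log M2 ≤ n * R2 ∧
    ∃ (f : (Fin n → 𝒳) → Fin M1) (g : (Fin n → 𝒵) → Fin M2),
      μ ≤ (MI (iid n p) (fun ω => f (fun i => (ω i).1)) (fun ω => g (fun i => (ω i).2))) / n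

set_option linter.unusedSectionVars false

section Aux2
variable [Fintype α] [Fintype β] [Fintype γ]

lemma ent_le_log_card {q : β → ℝ} (hq : IsPMF q) :
    ent q ≤ Real.log (Fintype.card β) := by
  obtain ⟨hq0, hq1⟩ := hq
  have hne : Nonempty β := by
    by_contra h
    rw [not_nonempty_iff] at h
    rw [Finset.sum_eq_zero (fun b _ => (h.false b).elim)] at hq1
    norm_num at hq1
  set N : ℝ := (Fintype.card β : ℝ) with hNdef
  have hN : 0 < N := by
    have := Fintype.card_pos_iff.2 hne
    positivity
  have key : ∀ b, -(q b * Real.log (q b)) - q b * Real.log N ≤ 1 / N - q b := by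
    intro b
    rcases eq_or_lt_of_le (hq0 b) with h | h
    · rw [← h]
      simp
      positivity
    · have h2 : Real.log (1 / (q b * N)) ≤ 1 / (q b * N) - 1 :=
        Real.log_le_sub_one_of_pos (by positivity)
      rw [Real.log_div one_ne_zero (by positivity), Real.log_one,
        Real.log_mul (ne_of_gt h) (ne_of_gt hN)] at h2
      have h3 : q b * (0 - (Real.log (q b) + Real.log N)) ≤ q b * (1 / (q b * N) - 1) :=
        mul_le_mul_of_nonneg_left h2 (le_of_lt h)
      have h4 : q b * (1 / (q b * N)) = 1 / N := by
        field_simp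
      nlinarith [h3, h4]
  have hsum : ∑ b, (-(q b * Real.log (q b)) - q b * Real.log N) ≤ ∑ b : β, (1 / N - q b) := 
    Finset.sum_le_sum fun b _ => key b
  have e1 : ∑ b : β, -(q b * Real.log (q b)) = ent q := by
    unfold ent; exact Finset.sum_neg_distrib (f := fun b => q b * Real.log (q b))
  have e2 : ∑ b : β, q b * Real.log N = Real.log N := by
    rw [← Finset.sum_mul, hq1, one_mul]
  have e3 : ∑ _b : β, (1 / N : ℝ) = 1 := by
    rw [Finset.sum_const, Finset.card_univ, nsmul_eq_mul, hNdef]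
    field_simp
  rw [Finset.sum_sub_distrib, Finset.sum_sub_distrib, e1, e2, e3, hq1] at hsum
  linarith

lemma ent_comp_equiv (p : α → ℝ) (e : β ≃ α) : ent (fun b => p (e b)) = ent p := by
  unfold ent
  congr 1
  exact Fintype.sum_equiv e _ _ fun b => rfl

lemma mul_log_mul (x y : ℝ) (hx : 0 ≤ x) (hy : 0 ≤ y) :
    x * y * Real.log (x * y) = x * y * Real.log x + x * y * Real.log y := by
  rcases eq_or_lt_of_le hx with h | h
  · rw [← h]; ring_nf
  rcases eq_or_lt_of_le hy with h' | h'
  · rw [← h']; ring_nf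
  rw [Real.log_mul (ne_of_gt h) (ne_of_gt h')]
  ring

lemma ent_prod {q : α → ℝ} {r : β → ℝ} (hq : IsPMF q) (hr : IsPMF r) :
    ent (fun x : α × β => q x.1 * r x.2) = ent q + ent r := by
  unfold ent
  rw [Fintype.sum_prod_type]
  have key : ∀ a, ∑ b, q a * r b * Real.log (q a * r b)
      = q a * Real.log (q a) + q a * ∑ b, r b * Real.log (r b) := by
    intro a
    have e : ∀ b, q a * r b * Real.log (q a * r b)
        = (q a * Real.log (q a)) * r b + q a * (r b * Real.log (r b)) := fun b => by
      rw [mul_log_mul _ _ (hq.1 a) (hr.1 b)]; ring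
    rw [Finset.sum_congr rfl fun b _ => e b, Finset.sum_add_distrib, ← Finset.mul_sum,
      ← Finset.mul_sum, hr.2, mul_one]
  simp only [key]
  rw [Finset.sum_add_distrib, ← Finset.sum_mul, hq.2]
  ring

lemma isPMF_iid (n : ℕ) {p : α → ℝ} (hp : IsPMF p) : IsPMF (iid n p) := by
  constructor
  · intro x
    exact Finset.prod_nonneg fun i _ => hp.1 _
  · unfold iid
    rw [← Fintype.prod_sum (fun (_ : Fin n) (a : α) => p a)]
    simp [hp.2]

lemma ent_iid (n : ℕ) {p : α → ℝ} (hp : IsPMF p) : ent (iid n p) = n * ent p := by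
  induction n with
  | zero =>
    simp [ent, iid]
  | succ n ih =>
    have he : ent (iid (n+1) p)
        = ent (fun x : α × (Fin n → α) => iid (n+1) p (Fin.cons x.1 x.2)) := by
      exact (ent_comp_equiv (iid (n+1) p) (Fin.consEquiv (fun _ => α))).symm
    have he2 : (fun x : α × (Fin n → α) => iid (n+1) p (Fin.cons x.1 x.2))
        = fun x => p x.1 * iid n p x.2 := by
      funext x
      unfold iid
      rw [Fin.prod_univ_succ]
      simp
    rw [he, he2, ent_prod hp (isPMF_iid n hp), ih]
    push_cast
    ring


end Aux2

-- ## Auxiliary lemmas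

section Aux
variable [Fintype α] [Fintype β] [Fintype γ]

lemma sum_pmap (p : α → ℝ) (f : α → β) : ∑ b, pmap f p b = ∑ a, p a := by
  unfold pmap
  rw [Finset.sum_comm]
  refine Finset.sum_congr rfl fun a _ => ?_
  simp

lemma pmap_nonneg {p : α → ℝ} (hp : ∀ a, 0 ≤ p a) (f : α → β) (b : β) : 0 ≤ pmap f p b :=
  Finset.sum_nonneg fun a _ => by split <;> simp [hp a]

lemma isPMF_pmap {p : α → ℝ} (hp : IsPMF p) (f : α → β) : IsPMF (pmap f p) :=
  ⟨pmap_nonneg hp.1 f, by rw [sum_pmap, hp.2]⟩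

lemma pmap_comp (p : α → ℝ) (f : α → β) (g : β → γ) :
    pmap g (pmap f p) = pmap (fun a => g (f a)) p := by
  funext c
  unfold pmap
  have h : ∀ b, (if g b = c then ∑ a, (if f a = b then p a else 0) else 0)
      = ∑ a, (if f a = b then (if g b = c then p a else 0) else 0) := by
    intro b
    split_ifs with h <;> simp [h]
  simp only [h]
  rw [Finset.sum_comm]
  refine Finset.sum_congr rfl fun a _ => ?_
  simp [Finset.sum_ite_eq]

lemma Hof_pmap (p : α → ℝ) (f : α → β) (g : β → γ) :
    Hof (pmap f p) g = Hof p (fun a => g (f a)) := by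
  unfold Hof
  rw [pmap_comp]

lemma ent_pmap_injective (q : β → ℝ) {e : β → γ} (he : Function.Injective e) :
    ent (pmap e q) = ent q := by
  have h1 : ∀ b, pmap e q (e b) = q b := by
    intro b
    unfold pmap
    rw [Finset.sum_eq_single b]
    · simp
    · intro a _ hab
      rw [if_neg (fun h => hab (he h))]
    · simp
  have h0 : ∀ c, c ∉ Finset.univ.image e → pmap e q c = 0 := by
    intro c hc
    unfold pmap
    refine Finset.sum_eq_zero fun a _ => ?_
    rw [if_neg]
    intro h
    exact hc (Finset.mem_image.2 ⟨a, Finset.mem_univ a, h⟩)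
  unfold ent
  congr 1
  rw [← Finset.sum_subset (Finset.subset_univ (Finset.univ.image e))
      (fun c _ hc => by rw [h0 c hc, zero_mul])]
  rw [Finset.sum_image (fun a _ b _ h => he h)]
  exact Finset.sum_congr rfl fun b _ => by rw [h1]

lemma Hof_comp_inj (p : α → ℝ) (f : α → β) {e : β → γ} (he : Function.Injective e) :
    Hof p (fun a => e (f a)) = Hof p f := by
  unfold Hof
  rw [← pmap_comp, ent_pmap_injective _ he]

lemma Hof_congr {p : α → ℝ} {f g : α → β} (h : ∀ a, f a = g a) : Hof p f = Hof p g := by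
  congr 1; exact funext h

/-- If `f` and `g` determine each other pointwise, their entropies agree. -/
lemma Hof_det {p : α → ℝ} {f : α → β} {g : α → γ} (e : β → γ) (d : γ → β)
    (he : ∀ a, g a = e (f a)) (hd : ∀ a, f a = d (g a)) : Hof p f = Hof p g := by
  have h1 : Hof p (fun a => (f a, g a)) = Hof p f := by
    have : Hof p (fun a => (f a, e (f a))) = Hof p f :=
      Hof_comp_inj p f (e := fun t => (t, e t)) (fun s t h => congrArg Prod.fst h)
    rw [← this]
    exact Hof_congr fun a => by rw [he a]
  have h2 : Hof p (fun a => (f a, g a)) = Hof p g := by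
    have : Hof p (fun a => (d (g a), g a)) = Hof p g :=
      Hof_comp_inj p g (e := fun t => (d t, t)) (fun s t h => congrArg Prod.snd h)
    rw [← this]
    exact Hof_congr fun a => by rw [← hd a]
  rw [← h1, h2]

end Aux



-- ## Splitting sums over function spaces

section Split
variable {ι A : Type*} [Fintype ι] [DecidableEq ι] [Fintype A]

noncomputable def recomb (i : ι) (x : A) (η : {j : ι // j ≠ i} → A) : ι → A :=
  (Equiv.funSplitAt i A).symm (x, η)

lemma recomb_same (i : ι) (x : A) (η : {j : ι // j ≠ i} → A) : recomb i x η i = x := by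
  simp [recomb]

lemma recomb_ne (i : ι) (x : A) (η : {j : ι // j ≠ i} → A) {j : ι} (h : j ≠ i) :
    recomb i x η j = η ⟨j, h⟩ := by
  simp [recomb, h]

lemma sum_split_at (i : ι) (H : (ι → A) → ℝ) :
    ∑ ω : ι → A, H ω = ∑ x : A, ∑ η : {j : ι // j ≠ i} → A, H (recomb i x η) := by
  rw [← Equiv.sum_comp (Equiv.funSplitAt i A).symm H]
  rw [Fintype.sum_prod_type]
  rfl

lemma prod_split_at (i : ι) (q : A → ℝ) (x : A) (η : {j : ι // j ≠ i} → A) :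
    ∏ j, q (recomb i x η j) = q x * ∏ j : {j : ι // j ≠ i}, q (η j) := by
  rw [← Finset.mul_prod_erase Finset.univ _ (Finset.mem_univ i), recomb_same]
  congr 1
  rw [Finset.prod_subtype (Finset.univ.erase i) (p := fun j => j ≠ i) (by simp)
    (fun j => q (recomb i x η j))]
  exact Finset.prod_congr rfl fun j _ => by rw [recomb_ne i x η j.2]

/-- The key conditioning identity. -/
lemma sum_pi_cond (i : ι) (p : A → ℝ) (φ : (ι → A) → ℝ) (x : A) :
    (∑ ω : ι → A, if ω i = x then φ ω * ∏ j, p (ω j) else 0)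
      = p x * ∑ η : {j : ι // j ≠ i} → A,
          φ (recomb i x η) * ∏ j : {j : ι // j ≠ i}, p (η j) := by
  rw [sum_split_at i]
  have hinner : ∀ x' : A, (∑ η : {j : ι // j ≠ i} → A,
      if recomb i x' η i = x then φ (recomb i x' η) * ∏ j, p (recomb i x' η j) else 0)
      = if x' = x then p x' * ∑ η : {j : ι // j ≠ i} → A,
          φ (recomb i x' η) * ∏ j : {j : ι // j ≠ i}, p (η j) else 0 := by
    intro x'
    by_cases h : x' = x
    · rw [if_pos h, Finset.mul_sum]
      refine Finset.sum_congr rfl fun η _ => ?_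
      rw [if_pos (by rw [recomb_same]; exact h), prod_split_at]
      ring
    · rw [if_neg h]
      refine Finset.sum_eq_zero fun η _ => ?_
      rw [if_neg (by rw [recomb_same]; exact h)]
  rw [Finset.sum_congr rfl fun x' _ => hinner x']
  rw [Finset.sum_ite_eq' Finset.univ x
    (fun x' => p x' * ∑ η : {j : ι // j ≠ i} → A,
      φ (recomb i x' η) * ∏ j : {j : ι // j ≠ i}, p (η j))]
  simp

lemma sum_prod_sub (i : ι) {p : A → ℝ} (hp1 : ∑ a, p a = 1) :
    ∑ η : {j : ι // j ≠ i} → A, ∏ j : {j : ι // j ≠ i}, p (η j) = 1 := by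
  rw [← Fintype.prod_sum (fun (_ : {j : ι // j ≠ i}) (a : A) => p a)]
  simp [hp1]

end Split

-- ## Mixture entropy and iid pushforwards

section Mix
variable {Ω τ A T : Type*} [Fintype Ω] [Fintype τ] [Fintype A] [Fintype T]

lemma Hof_mixture {n : ℕ} (hn : 0 < n) {P0 : Ω → ℝ} (h0 : IsPMF P0)
    (g : Fin n → Ω → τ) :
    Hof (fun w : Ω × Fin n => P0 w.1 / n) (fun w => (g w.2 w.1, w.2))
      = Real.log n + (1 / n) * ∑ i, Hof P0 (g i) := by
  have hn' : (n : ℝ) ≠ 0 := Nat.cast_ne_zero.2 hn.ne'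
  have hpm : ∀ (t : τ) (i : Fin n),
      pmap (fun w : Ω × Fin n => (g w.2 w.1, w.2)) (fun w => P0 w.1 / n) (t, i)
        = pmap (g i) P0 t / n := by
    intro t i
    unfold pmap
    rw [Fintype.sum_prod_type, Finset.sum_div]
    refine Finset.sum_congr rfl fun ω _ => ?_
    rw [Finset.sum_eq_single i]
    · by_cases h : g i ω = t <;> simp [Prod.ext_iff, h]
    · intro j _ hj
      rw [if_neg (fun h => hj (congrArg Prod.snd h))]
    · simp
  unfold Hof ent
  rw [Fintype.sum_prod_type]
  simp only [hpm]
  have hterm : ∀ x : ℝ, 0 ≤ x → x / n * Real.log (x / n)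
      = (x * Real.log x - x * Real.log n) / n := by
    intro x hx
    rcases eq_or_lt_of_le hx with h | h
    · rw [← h]; simp
    · rw [Real.log_div (ne_of_gt h) hn']; ring
  rw [Finset.sum_comm]
  have hinner : ∀ i : Fin n, ∑ t, pmap (g i) P0 t / n * Real.log (pmap (g i) P0 t / n)
      = (- Hof P0 (g i) - Real.log n) / n := by
    intro i
    have hr1 : ∑ t, pmap (g i) P0 t = 1 := by rw [sum_pmap, h0.2]
    rw [Finset.sum_congr rfl fun t _ => hterm _ (pmap_nonneg h0.1 _ t)]
    rw [← Finset.sum_div, Finset.sum_sub_distrib, ← Finset.sum_mul, hr1, one_mul]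
    unfold Hof ent
    ring
  rw [Finset.sum_congr rfl fun i _ => hinner i, ← Finset.sum_div, Finset.sum_sub_distrib,
    Finset.sum_neg_distrib, Finset.sum_const, Finset.card_univ, Fintype.card_fin, nsmul_eq_mul]
  unfold Hof ent
  rw [Finset.sum_neg_distrib]
  field_simp
  ring

lemma pmap_pi {n : ℕ} (p : A → ℝ) (F : A → T) :
    pmap (fun (ω : Fin n → A) (j : Fin n) => F (ω j)) (iid n p) = iid n (pmap F p) := by
  funext ξ
  unfold pmap iid
  have key : ∀ ω : Fin n → A,
      (@ite ℝ ((fun j => F (ω j)) = ξ) (Classical.propDecidable _) (∏ j, p (ω j)) 0)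
      = ∏ j, (if F (ω j) = ξ j then p (ω j) else 0) := by
    intro ω
    by_cases h : (fun j => F (ω j)) = ξ
    · rw [if_pos h]
      exact Finset.prod_congr rfl fun j _ => (if_pos (congrFun h j)).symm
    · rw [if_neg h]
      obtain ⟨j0, hj0⟩ : ∃ j, F (ω j) ≠ ξ j := by
        by_contra h2
        push_neg at h2
        exact h (funext h2)
      have hz : (if F (ω j0) = ξ j0 then p (ω j0) else (0:ℝ)) = 0 := if_neg hj0
      exact (Finset.prod_eq_zero (Finset.mem_univ j0) hz).symm
  refine Eq.trans (Finset.sum_congr rfl fun ω _ => key ω) ?_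
  rw [← Fintype.prod_sum (fun (j : Fin n) (a : A) => if F a = ξ j then p a else 0)]

lemma sum_pi_cond1 {ι : Type*} [Fintype ι] [DecidableEq ι] (i : ι) (p : A → ℝ) (x : A) :
    (∑ ω : ι → A, if ω i = x then ∏ j, p (ω j) else 0)
      = p x * ∑ η : {j : ι // j ≠ i} → A, ∏ j : {j : ι // j ≠ i}, p (η j) := by
  have := sum_pi_cond i p (fun _ => 1) x
  simpa using this

lemma pmap_eval {n : ℕ} {p : A → ℝ} (hp : IsPMF p) (i : Fin n) :
    pmap (fun ω : Fin n → A => ω i) (iid n p) = p := by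
  funext a
  simp only [pmap, iid]
  rw [sum_pi_cond1 i p a, sum_prod_sub i hp.2, mul_one]

end Mix

-- ## Conditional independence from factorization

section CIF
variable [Fintype α] [Fintype β] [Fintype γ]

lemma condIndep_of_factor {σ' : Type*} [Fintype σ'] (p : α → ℝ) (f : α → β) (g : α → γ)
    (m : α → σ') (u : β → σ' → ℝ) (v : γ → σ' → ℝ)
    (h : ∀ x y s, pmap (fun w => (f w, g w, m w)) p (x, y, s) = u x s * v y s) :
    CondIndep p f g m := by
  have h1 : ∀ x s, pmap (fun w => (f w, m w)) p (x, s)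
      = ∑ y, pmap (fun w => (f w, g w, m w)) p (x, y, s) := by
    intro x s
    simp only [pmap]
    conv_rhs => rw [Finset.sum_comm]
    refine Finset.sum_congr rfl fun a _ => ?_
    by_cases hx : f a = x ∧ m a = s
    · simp [Prod.ext_iff, hx.1, hx.2]
    · rw [if_neg (by simp only [Prod.ext_iff]; tauto)]
      refine (Finset.sum_eq_zero fun y _ => ?_).symm
      rw [if_neg (by simp only [Prod.ext_iff]; tauto)]
  have h2 : ∀ y s, pmap (fun w => (g w, m w)) p (y, s)
      = ∑ x, pmap (fun w => (f w, g w, m w)) p (x, y, s) := by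
    intro y s
    simp only [pmap]
    conv_rhs => rw [Finset.sum_comm]
    refine Finset.sum_congr rfl fun a _ => ?_
    by_cases hx : g a = y ∧ m a = s
    · simp [Prod.ext_iff, hx.1, hx.2]
    · rw [if_neg (by simp only [Prod.ext_iff]; tauto)]
      refine (Finset.sum_eq_zero fun x _ => ?_).symm
      rw [if_neg (by simp only [Prod.ext_iff]; tauto)]
  have h3 : ∀ s, pmap m p s = ∑ x, ∑ y, pmap (fun w => (f w, g w, m w)) p (x, y, s) := by
    intro s
    simp only [pmap]
    conv_rhs => enter [2, x]; rw [Finset.sum_comm]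
    conv_rhs => rw [Finset.sum_comm]
    refine Finset.sum_congr rfl fun a _ => ?_
    by_cases hx : m a = s
    · rw [if_pos hx]
      refine .symm ((Finset.sum_eq_single (f a)
          (fun x _ hxa => Finset.sum_eq_zero fun y _ =>
            if_neg (by simp only [Prod.ext_iff]; tauto))
          (fun hfa => absurd (Finset.mem_univ (f a)) hfa)).trans ?_)
      simp [Prod.ext_iff, hx]
    · rw [if_neg hx]
      refine (Finset.sum_eq_zero fun x _ => Finset.sum_eq_zero fun y _ => ?_).symm
      rw [if_neg (by simp only [Prod.ext_iff]; tauto)]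
  intro x y s
  rw [h1, h2, h3]
  simp only [h]
  have hA : (∑ x' : β, ∑ y' : γ, u x' s * v y' s)
      = (∑ x' : β, u x' s) * (∑ y' : γ, v y' s) :=
    (Finset.sum_mul_sum Finset.univ Finset.univ (fun x' => u x' s) (fun y' => v y' s)).symm
  have hB : (∑ y' : γ, u x s * v y' s) = u x s * ∑ y' : γ, v y' s :=
    (Finset.mul_sum Finset.univ (fun y' => v y' s) (u x s)).symm
  have hC : (∑ x' : β, u x' s * v y s) = (∑ x' : β, u x' s) * v y s :=
    (Finset.sum_mul Finset.univ (fun x' => u x' s) (v y s)).symm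
  rw [hA, hB, hC]
  ring

end CIF

-- ## Truncation helpers

def truncF {A : Type*} {n : ℕ} (k : ℕ) (ξ : Fin n → A) : Fin n → Option A :=
  fun j => if (j : ℕ) < k then some (ξ j) else none

lemma truncF_zero {A : Type*} {n : ℕ} (ξ : Fin n → A) :
    truncF 0 ξ = fun _ => none := by
  funext j; simp [truncF]

lemma truncF_full {A : Type*} {n : ℕ} (ξ : Fin n → A) (j : Fin n) :
    truncF n ξ j = some (ξ j) := by
  simp [truncF, j.isLt]

lemma truncF_succ {A : Type*} {n : ℕ} (ξ : Fin n → A) (i : Fin n) :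
    truncF (i.1 + 1) ξ = Function.update (truncF i.1 ξ) i (some (ξ i)) := by
  funext j
  by_cases h : j = i
  · subst h
    simp [truncF, Function.update_self]
  · rw [Function.update_of_ne h]
    have hne : (j : ℕ) ≠ (i : ℕ) := fun hv => h (Fin.ext hv)
    unfold truncF
    by_cases h2 : (j : ℕ) < i.1
    · rw [if_pos h2, if_pos (by omega)]
    · rw [if_neg h2, if_neg (by omega)]

lemma truncF_erase {A : Type*} {n : ℕ} (ξ : Fin n → A) (i : Fin n) :
    (fun j => if j = i then none else truncF (i.1 + 1) ξ j) = truncF i.1 ξ := by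
  funext j
  by_cases h : j = i
  · subst h
    simp [truncF]
  · rw [if_neg h]
    have hne : (j : ℕ) ≠ (i : ℕ) := fun hv => h (Fin.ext hv)
    unfold truncF
    by_cases h2 : (j : ℕ) < i.1
    · rw [if_pos h2, if_pos (by omega)]
    · rw [if_neg h2, if_neg (by omega)]

-- ## The single-letterization identity

lemma pmap_eval_mix {S : Type*} [Fintype S] {n : ℕ} (hn : 0 < n) {p : S → ℝ} (hp : IsPMF p) :
    pmap (fun w : (Fin n → S) × Fin n => w.1 w.2) (fun w => iid n p w.1 / n) = p := by
  have hn' : (n : ℝ) ≠ 0 := Nat.cast_ne_zero.2 hn.ne'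
  funext a
  simp only [pmap]
  rw [Fintype.sum_prod_type, Finset.sum_comm]
  have hinner : ∀ i : Fin n, (∑ ω : Fin n → S, if ω i = a then iid n p ω / n else 0)
      = p a / n := by
    intro i
    have e1 : ∀ ω : Fin n → S, (if ω i = a then iid n p ω / n else 0)
        = (if ω i = a then ∏ j, p (ω j) else 0) / n := by
      intro ω
      split_ifs <;> simp [iid]
    rw [Finset.sum_congr rfl fun ω _ => e1 ω, ← Finset.sum_div,
      sum_pi_cond1 i p a, sum_prod_sub i hp.2, mul_one]
  rw [Finset.sum_congr rfl fun i _ => hinner i, Finset.sum_const, Finset.card_univ,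
    Fintype.card_fin, nsmul_eq_mul]
  field_simp

lemma MI_mix {S K T : Type*} [Fintype S] [Fintype K] [Fintype T] [Nonempty T]
    {n : ℕ} (hn : 0 < n) {p : S → ℝ} (hp : IsPMF p)
    (c : S → T) (W : (Fin n → S) → K) (F : (Fin n → T) → K)
    (hW : ∀ ω, W ω = F (fun j => c (ω j))) :
    Hof (fun w : (Fin n → S) × Fin n => iid n p w.1 / n)
        (fun w => (W w.1, truncF (w.2 : ℕ) (fun j => c (w.1 j)), w.2))
      + Hof (fun w : (Fin n → S) × Fin n => iid n p w.1 / n) (fun w => c (w.1 w.2))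
      - Hof (fun w : (Fin n → S) × Fin n => iid n p w.1 / n)
          (fun w => ((W w.1, truncF (w.2 : ℕ) (fun j => c (w.1 j)), w.2), c (w.1 w.2)))
      = Hof (iid n p) W / n := by
  classical
  have hn' : (n : ℝ) ≠ 0 := Nat.cast_ne_zero.2 hn.ne'
  set P0 := iid n p with hP0def
  have hP0 : IsPMF P0 := isPMF_iid n hp
  set A : ℕ → ℝ := fun k => Hof P0 (fun ω => (W ω, truncF k (fun j => c (ω j)))) with hA
  set P : ((Fin n → S) × Fin n) → ℝ := fun w => P0 w.1 / n with hPdef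
  -- Step 1 : first term
  have step1 : Hof P (fun w => (W w.1, truncF (w.2 : ℕ) (fun j => c (w.1 j)), w.2))
      = Real.log n + (1 / n) * ∑ i : Fin n, A (i : ℕ) := by
    have h1 : Hof P (fun w => (W w.1, truncF (w.2 : ℕ) (fun j => c (w.1 j)), w.2))
        = Hof P (fun w => ((W w.1, truncF (w.2 : ℕ) (fun j => c (w.1 j))), w.2)) := by
      refine Hof_comp_inj P (fun w => ((W w.1, truncF (w.2 : ℕ) (fun j => c (w.1 j))), w.2))
        (e := fun t => (t.1.1, t.1.2, t.2)) ?_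
      intro s t h
      have h1 := congrArg (fun x : K × (Fin n → Option T) × Fin n => x.1) h
      have h2 := congrArg (fun x : K × (Fin n → Option T) × Fin n => x.2.1) h
      have h3 := congrArg (fun x : K × (Fin n → Option T) × Fin n => x.2.2) h
      exact Prod.ext (Prod.ext h1 h2) h3
    rw [h1]
    exact Hof_mixture hn hP0 (fun i ω => (W ω, truncF (i : ℕ) (fun j => c (ω j))))
  -- Step 2 : middle term
  have step2 : Hof P (fun w => c (w.1 w.2)) = Hof p c := by
    have : Hof (pmap (fun w : (Fin n → S) × Fin n => w.1 w.2) P) c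
        = Hof P (fun w => c (w.1 w.2)) := Hof_pmap P _ c
    rw [← this, pmap_eval_mix hn hp]
  -- Step 3 : third term
  have step3 : Hof P (fun w => ((W w.1, truncF (w.2 : ℕ) (fun j => c (w.1 j)), w.2), c (w.1 w.2)))
      = Real.log n + (1 / n) * ∑ i : Fin n, A ((i : ℕ) + 1) := by
    have hdet : Hof P (fun w => ((W w.1, truncF (w.2 : ℕ) (fun j => c (w.1 j)), w.2), c (w.1 w.2)))
        = Hof P (fun w => ((W w.1, truncF ((w.2 : ℕ) + 1) (fun j => c (w.1 j))), w.2)) := by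
      refine Hof_det (e := fun t : (K × (Fin n → Option T) × Fin n) × T =>
          ((t.1.1, Function.update t.1.2.1 t.1.2.2 (some t.2)), t.1.2.2))
        (d := fun t : (K × (Fin n → Option T)) × Fin n =>
          ((t.1.1, fun j => if j = t.2 then none else t.1.2 j, t.2),
            (t.1.2 t.2).getD (Classical.arbitrary T))) ?_ ?_
      · intro w
        simp only
        rw [truncF_succ (fun j => c (w.1 j)) w.2]
      · intro w
        refine Prod.ext (Prod.ext rfl (Prod.ext ?_ rfl)) ?_
        · exact (truncF_erase (fun j => c (w.1 j)) w.2).symm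
        · show c (w.1 w.2)
            = (truncF ((w.2 : ℕ) + 1) (fun j => c (w.1 j)) w.2).getD (Classical.arbitrary T)
          rw [truncF_succ (fun j => c (w.1 j)) w.2, Function.update_self]
          rfl
    rw [hdet]
    exact Hof_mixture hn hP0 (fun i ω => (W ω, truncF ((i : ℕ) + 1) (fun j => c (ω j))))
  -- Step 4 : A 0
  have step4 : A 0 = Hof P0 W := by
    have h1 : A 0 = Hof P0 (fun ω => (W ω, (fun _ : Fin n => (none : Option T)))) := by
      refine Hof_congr fun ω => ?_
      rw [truncF_zero]
    rw [h1]
    exact Hof_comp_inj P0 W (e := fun k => (k, fun _ : Fin n => (none : Option T)))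
      (fun s t h => congrArg Prod.fst h)
  -- Step 5 : A n
  have step5 : A n = (n : ℝ) * ent (pmap c p) := by
    have h1 : A n = Hof P0 (fun ω (j : Fin n) => c (ω j)) := by
      refine Hof_det (e := fun ξ : Fin n → T => (F ξ, fun j => some (ξ j)))
        (d := fun t : K × (Fin n → Option T) =>
          fun j => (t.2 j).getD (Classical.arbitrary T)) ?_ ?_ |>.symm
      · intro ω
        refine Prod.ext ?_ ?_
        · exact hW ω
        · funext j
          exact truncF_full (fun j => c (ω j)) j
      · intro ω
        funext j
        simp only
        rw [truncF_full (fun j => c (ω j)) j]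
        rfl
    rw [h1]
    unfold Hof
    rw [hP0def, pmap_pi p c, ent_iid n (isPMF_pmap hp c)]
  -- Telescoping
  have tele : ∑ i : Fin n, (A (i : ℕ) - A ((i : ℕ) + 1)) = A 0 - A n := by
    rw [Fin.sum_univ_eq_sum_range (fun k => A k - A (k + 1)) n]
    have := Finset.sum_range_sub (fun k => A k) n
    have h2 : ∑ k ∈ Finset.range n, (A k - A (k + 1))
        = - ∑ k ∈ Finset.range n, (A (k + 1) - A k) := by
      rw [← Finset.sum_neg_distrib]
      exact Finset.sum_congr rfl fun k _ => by ring
    rw [h2, this]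
    ring
  rw [step1, step2, step3]
  have hsum : ∑ i : Fin n, A (i : ℕ) - ∑ i : Fin n, A ((i : ℕ) + 1)
      = A 0 - A n := by
    rw [← Finset.sum_sub_distrib]
    exact tele
  have step2' : Hof p c = ent (pmap c p) := rfl
  rw [step2']
  have expand : Real.log n + 1 / n * ∑ i : Fin n, A (i : ℕ) + ent (pmap c p)
      - (Real.log n + 1 / n * ∑ i : Fin n, A ((i : ℕ) + 1))
      = ent (pmap c p) + 1 / n * (∑ i : Fin n, A (i : ℕ) - ∑ i : Fin n, A ((i : ℕ) + 1)) := by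
    ring
  rw [expand, hsum, step4, step5]
  field_simp
  ring

-- ## Indicator-based conditioning identity

noncomputable def ind (P : Prop) : ℝ := if P then 1 else 0

def crec {S T : Type*} {n : ℕ} (c : S → T) (i0 : Fin n) (t0 : T)
    (η : {j : Fin n // j ≠ i0} → S) : Fin n → T :=
  fun j => if h : j = i0 then t0 else c (η ⟨j, h⟩)

lemma core {S T : Type*} [Fintype S] {n : ℕ} (p : S → ℝ) (i0 : Fin n) (c : S → T)
    (Q : (Fin n → T) → Prop) (s0 : S) (t0 : T) (ht : c s0 = t0) :
    (∑ ω : Fin n → S, ind (Q (fun j => c (ω j)) ∧ ω i0 = s0) * ∏ j, p (ω j))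
      = p s0 * ∑ η : {j : Fin n // j ≠ i0} → S,
          ind (Q (crec c i0 t0 η)) * ∏ j : {j : Fin n // j ≠ i0}, p (η j) := by
  subst ht
  have e1 : ∀ ω : Fin n → S, ind (Q (fun j => c (ω j)) ∧ ω i0 = s0) * ∏ j, p (ω j)
      = if ω i0 = s0 then (fun ω' => ind (Q (fun j => c (ω' j)))) ω * ∏ j, p (ω j) else 0 := by
    intro ω
    by_cases h2 : ω i0 = s0
    · rw [if_pos h2]
      by_cases h1 : Q (fun j => c (ω j)) <;> simp [ind, h1, h2]
    · rw [if_neg h2]; simp [ind, h2]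
  rw [Finset.sum_congr rfl fun ω _ => e1 ω,
    sum_pi_cond i0 p (fun ω' => ind (Q (fun j => c (ω' j)))) s0]
  congr 1
  refine Finset.sum_congr rfl fun η _ => ?_
  have hc : (fun j => c (recomb i0 s0 η j)) = crec c i0 (c s0) η := by
    funext j
    by_cases h : j = i0
    · subst h; rw [recomb_same]; simp [crec]
    · rw [recomb_ne i0 s0 η h]; simp [crec, h]
  simp only [hc]

-- ## Main construction pieces

noncomputable def Pmix {S : Type*} [Fintype S] (n : ℕ) (p : S → ℝ) :
    ((Fin n → S) × Fin n) → ℝ := fun w => iid n p w.1 / (n : ℝ)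

section Pre
variable {𝒳 𝒵 : Type}

noncomputable def BIGmap [Fintype 𝒳] [Fintype 𝒵] (n M1 M2 : ℕ)
    (f : (Fin n → 𝒳) → Fin M1) (g : (Fin n → 𝒵) → Fin M2)
    (w : (Fin n → 𝒳 × 𝒵) × Fin n) :
    (Fin M1 × (Fin n → Option 𝒳) × Fin n) × 𝒳 × 𝒵 × (Fin M2 × (Fin n → Option 𝒵) × Fin n) :=
  ((f (fun j => (w.1 j).1), truncF (w.2 : ℕ) (fun j => (w.1 j).1), w.2),
   (w.1 w.2).1, (w.1 w.2).2,
   (g (fun j => (w.1 j).2), truncF (w.2 : ℕ) (fun j => (w.1 j).2), w.2))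

lemma isPMF_Pmix {S : Type*} [Fintype S] {n : ℕ} (hn : 0 < n) {p : S → ℝ} (hp : IsPMF p) :
    IsPMF (Pmix n p) := by
  have hn' : (n : ℝ) ≠ 0 := Nat.cast_ne_zero.2 hn.ne'
  constructor
  · intro w
    exact div_nonneg (Finset.prod_nonneg fun j _ => hp.1 _) (Nat.cast_nonneg n)
  · show ∑ w : (Fin n → S) × Fin n, iid n p w.1 / (n : ℝ) = 1
    rw [Fintype.sum_prod_type]
    have he : ∀ ω : Fin n → S, (∑ _i : Fin n, iid n p ω / (n : ℝ)) = iid n p ω := by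
      intro ω
      rw [Finset.sum_const, Finset.card_univ, Fintype.card_fin, nsmul_eq_mul]
      field_simp
    rw [Finset.sum_congr rfl fun ω _ => he ω, (isPMF_iid n hp).2]

end Pre

/-- **Theorem 1, part `R ⊆ R_o`:** every achievable triple `(μ, R1, R2)` admits auxiliary
finitely supported random variables `U, V` jointly distributed with `(X, Z)` such that
`U – X – Z` and `X – Z – V` are Markov chains, `R1 ≥ I(U;X)`, `R2 ≥ I(V;Z)` and
`μ ≤ I(U;X) + I(V;Z) − I((U,V);(X,Z))`. -/
theorem two_source_outer_bound [Fintype 𝒳] [Fintype 𝒵]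
    (p : 𝒳 × 𝒵 → ℝ) (hp : IsPMF p) (μ R1 R2 : ℝ)
    (hach : Achievable p μ R1 R2) :
    ∃ (𝒰 𝒱 : Type) (_ : Fintype 𝒰) (_ : Fintype 𝒱) (q : 𝒰 × 𝒳 × 𝒵 × 𝒱 → ℝ),
      IsPMF q ∧
      -- the (X, Z)-marginal of the joint distribution is the source distribution
      pmap (fun w => (w.2.1, w.2.2.1)) q = p ∧
      -- Markov chain U – X – Z
      CondIndep q (fun w => w.1) (fun w => w.2.2.1) (fun w => w.2.1) ∧
      -- Markov chain X – Z – V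
      CondIndep q (fun w => w.2.1) (fun w => w.2.2.2) (fun w => w.2.2.1) ∧
      MI q (fun w => w.1) (fun w => w.2.1) ≤ R1 ∧
      MI q (fun w => w.2.2.2) (fun w => w.2.2.1) ≤ R2 ∧
      μ ≤ MI q (fun w => w.1) (fun w => w.2.1) + MI q (fun w => w.2.2.2) (fun w => w.2.2.1)
          - MI q (fun w => (w.1, w.2.2.2)) (fun w => (w.2.1, w.2.2.1)) := by
  classical
  obtain ⟨n, M1, M2, hn, hM1, hM2, f, g, hμ⟩ := hach
  have hn0 : (0:ℝ) < (n:ℝ) := by exact_mod_cast hn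
  have hn' : (n:ℝ) ≠ 0 := ne_of_gt hn0
  have hneXZ : Nonempty (𝒳 × 𝒵) := by
    by_contra h
    rw [not_nonempty_iff] at h
    have h2 := hp.2
    rw [Finset.sum_eq_zero (fun b _ => (h.false b).elim)] at h2
    norm_num at h2
  haveI hX : Nonempty 𝒳 := Nonempty.map Prod.fst hneXZ
  haveI hZ : Nonempty 𝒵 := Nonempty.map Prod.snd hneXZ
  have hP0 : IsPMF (iid n p) := isPMF_iid n hp
  have hPmf : IsPMF (Pmix n p) := isPMF_Pmix hn hp
  -- Mutual information computations
  have hMIU : MI (pmap (BIGmap n M1 M2 f g) (Pmix n p)) (fun w => w.1) (fun w => w.2.1)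
      = Hof (iid n p) (fun ω : Fin n → 𝒳 × 𝒵 => f (fun j => (ω j).1)) / n := by
    unfold MI
    rw [Hof_pmap, Hof_pmap, Hof_pmap]
    exact MI_mix hn hp Prod.fst (fun ω => f (fun j => (ω j).1)) f (fun ω => rfl)
  have hMIV : MI (pmap (BIGmap n M1 M2 f g) (Pmix n p)) (fun w => w.2.2.2) (fun w => w.2.2.1)
      = Hof (iid n p) (fun ω : Fin n → 𝒳 × 𝒵 => g (fun j => (ω j).2)) / n := by
    unfold MI
    rw [Hof_pmap, Hof_pmap, Hof_pmap]
    exact MI_mix hn hp Prod.snd (fun ω => g (fun j => (ω j).2)) g (fun ω => rfl)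
  have hMIUV : MI (pmap (BIGmap n M1 M2 f g) (Pmix n p))
        (fun w => (w.1, w.2.2.2)) (fun w => (w.2.1, w.2.2.1))
      = Hof (iid n p)
          (fun ω : Fin n → 𝒳 × 𝒵 => (f (fun j => (ω j).1), g (fun j => (ω j).2))) / n := by
    unfold MI
    rw [Hof_pmap, Hof_pmap, Hof_pmap]
    have hd1 : Hof (Pmix n p)
        (fun a : (Fin n → 𝒳 × 𝒵) × Fin n => ((BIGmap n M1 M2 f g a).1, (BIGmap n M1 M2 f g a).2.2.2))
        = Hof (Pmix n p) (fun w : (Fin n → 𝒳 × 𝒵) × Fin n =>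
            ((f (fun j => (w.1 j).1), g (fun j => (w.1 j).2)),
              truncF (w.2 : ℕ) (fun j => w.1 j), w.2)) := by
      refine Hof_det
        (e := fun t : (Fin M1 × (Fin n → Option 𝒳) × Fin n) × (Fin M2 × (Fin n → Option 𝒵) × Fin n) =>
          ((t.1.1, t.2.1),
            (fun k => (t.1.2.1 k).bind (fun a => ((t.2.2.1 k).map (fun b => (a, b))))), t.1.2.2))
        (d := fun t : (Fin M1 × Fin M2) × (Fin n → Option (𝒳 × 𝒵)) × Fin n =>
          ((t.1.1, fun k => (t.2.1 k).map Prod.fst, t.2.2),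
            (t.1.2, fun k => (t.2.1 k).map Prod.snd, t.2.2))) ?_ ?_
      · intro w
        simp only [BIGmap]
        refine Prod.ext rfl (Prod.ext ?_ rfl)
        funext k
        by_cases hk : (k : ℕ) < (w.2 : ℕ) <;> simp [truncF, hk]
      · intro w
        simp only [BIGmap]
        refine Prod.ext (Prod.ext rfl (Prod.ext ?_ rfl)) (Prod.ext rfl (Prod.ext ?_ rfl)) <;>
          · funext k
            by_cases hk : (k : ℕ) < (w.2 : ℕ) <;> simp [truncF, hk]
    have hd3 : Hof (Pmix n p)
        (fun a : (Fin n → 𝒳 × 𝒵) × Fin n =>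
          (((BIGmap n M1 M2 f g a).1, (BIGmap n M1 M2 f g a).2.2.2),
            ((BIGmap n M1 M2 f g a).2.1, (BIGmap n M1 M2 f g a).2.2.1)))
        = Hof (Pmix n p) (fun w : (Fin n → 𝒳 × 𝒵) × Fin n =>
            (((f (fun j => (w.1 j).1), g (fun j => (w.1 j).2)),
              truncF (w.2 : ℕ) (fun j => w.1 j), w.2), w.1 w.2)) := by
      refine Hof_det
        (e := fun t : ((Fin M1 × (Fin n → Option 𝒳) × Fin n) × (Fin M2 × (Fin n → Option 𝒵) × Fin n)) × 𝒳 × 𝒵 =>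
          (((t.1.1.1, t.1.2.1),
            (fun k => (t.1.1.2.1 k).bind (fun a => ((t.1.2.2.1 k).map (fun b => (a, b))))), t.1.1.2.2),
            t.2))
        (d := fun t : ((Fin M1 × Fin M2) × (Fin n → Option (𝒳 × 𝒵)) × Fin n) × (𝒳 × 𝒵) =>
          (((t.1.1.1, fun k => (t.1.2.1 k).map Prod.fst, t.1.2.2),
            (t.1.1.2, fun k => (t.1.2.1 k).map Prod.snd, t.1.2.2)), (t.2.1, t.2.2))) ?_ ?_
      · intro w
        simp only [BIGmap]
        refine Prod.ext (Prod.ext rfl (Prod.ext ?_ rfl)) rfl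
        funext k
        by_cases hk : (k : ℕ) < (w.2 : ℕ) <;> simp [truncF, hk]
      · intro w
        simp only [BIGmap]
        refine Prod.ext (Prod.ext (Prod.ext rfl (Prod.ext ?_ rfl)) (Prod.ext rfl (Prod.ext ?_ rfl))) rfl <;>
          · funext k
            by_cases hk : (k : ℕ) < (w.2 : ℕ) <;> simp [truncF, hk]
    rw [hd1, hd3]
    exact MI_mix hn hp (fun s : 𝒳 × 𝒵 => s)
      (fun ω => (f (fun j => (ω j).1), g (fun j => (ω j).2)))
      (fun ξ => (f (fun j => (ξ j).1), g (fun j => (ξ j).2))) (fun ω => rfl)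
  refine ⟨Fin M1 × (Fin n → Option 𝒳) × Fin n, Fin M2 × (Fin n → Option 𝒵) × Fin n,
    inferInstance, inferInstance, pmap (BIGmap n M1 M2 f g) (Pmix n p),
    isPMF_pmap hPmf _, ?_, ?_, ?_, ?_, ?_, ?_⟩
  · -- marginal
    rw [pmap_comp]
    exact pmap_eval_mix hn hp
  · -- Markov chain U - X - Z
    refine condIndep_of_factor _ _ _ _
      (fun uu x => (∑ η : {j : Fin n // j ≠ uu.2.2} → 𝒳 × 𝒵,
        ind (f (crec Prod.fst uu.2.2 x η) = uu.1
          ∧ truncF (uu.2.2 : ℕ) (crec Prod.fst uu.2.2 x η) = uu.2.1)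
        * ∏ j : {j : Fin n // j ≠ uu.2.2}, p (η j)) / n)
      (fun z x => p (x, z)) ?_
    rintro ⟨m1, t, i0⟩ z x
    dsimp only
    have hcomp : pmap (fun a : (Fin M1 × (Fin n → Option 𝒳) × Fin n) × 𝒳 × 𝒵 ×
          (Fin M2 × (Fin n → Option 𝒵) × Fin n) => (a.1, a.2.2.1, a.2.1))
        (pmap (BIGmap n M1 M2 f g) (Pmix n p))
        = pmap (fun w : (Fin n → 𝒳 × 𝒵) × Fin n =>
            ((f (fun j => (w.1 j).1), truncF (w.2 : ℕ) (fun j => (w.1 j).1), w.2),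
              (w.1 w.2).2, (w.1 w.2).1)) (Pmix n p) :=
      pmap_comp (Pmix n p) (BIGmap n M1 M2 f g) _
    rw [hcomp]
    simp only [pmap, Pmix]
    rw [Fintype.sum_prod_type, Finset.sum_comm]
    refine (Finset.sum_eq_single i0 ?_ ?_).trans ?_
    · intro i _ hi
      refine Finset.sum_eq_zero fun ω _ => if_neg fun hcon => hi ?_
      exact congrArg (fun y : (Fin M1 × (Fin n → Option 𝒳) × Fin n) × 𝒵 × 𝒳 => y.1.2.2) hcon
    · intro hmem
      exact absurd (Finset.mem_univ i0) hmem
    · have e1 : ∀ ω : Fin n → 𝒳 × 𝒵,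
          (if ((f (fun j => (ω j).1), truncF (i0 : ℕ) (fun j => (ω j).1), i0), (ω i0).2, (ω i0).1)
              = ((m1, t, i0), z, x) then iid n p ω / (n:ℝ) else 0)
          = (ind ((fun ξ : Fin n → 𝒳 => f ξ = m1 ∧ truncF (i0 : ℕ) ξ = t)
                (fun j => Prod.fst (ω j)) ∧ ω i0 = (x, z)) * ∏ j, p (ω j)) / n := by
        intro ω
        have hiff : (((f (fun j => (ω j).1), truncF (i0 : ℕ) (fun j => (ω j).1), i0),
              (ω i0).2, (ω i0).1) = ((m1, t, i0), z, x))
            ↔ ((f (fun j => (ω j).1) = m1 ∧ truncF (i0 : ℕ) (fun j => (ω j).1) = t)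
                ∧ ω i0 = (x, z)) := by
          simp only [Prod.ext_iff]
          constructor
          · rintro ⟨⟨h1, h2, _⟩, h3, h4⟩; exact ⟨⟨h1, h2⟩, h4, h3⟩
          · rintro ⟨⟨h1, h2⟩, h3, h4⟩; exact ⟨⟨h1, h2, trivial⟩, h4, h3⟩
        by_cases h : (f (fun j => (ω j).1) = m1 ∧ truncF (i0 : ℕ) (fun j => (ω j).1) = t)
            ∧ ω i0 = (x, z)
        · rw [if_pos (hiff.mpr h)]
          simp only [ind]
          rw [if_pos h, one_mul]
          rfl
        · rw [if_neg (fun hcon => h (hiff.mp hcon))]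
          simp only [ind]
          rw [if_neg h, zero_mul, zero_div]
      refine (Finset.sum_congr rfl fun ω _ => ?_).trans
        (?_ : ∑ ω : Fin n → 𝒳 × 𝒵, (ind ((fun ξ : Fin n → 𝒳 => f ξ = m1 ∧ truncF (i0 : ℕ) ξ = t)
          (fun j => Prod.fst (ω j)) ∧ ω i0 = (x, z)) * ∏ j, p (ω j)) / n = _)
      · convert e1 ω using 2
      rw [← Finset.sum_div,
        core p i0 Prod.fst (fun ξ : Fin n → 𝒳 => f ξ = m1 ∧ truncF (i0 : ℕ) ξ = t) (x, z) x rfl]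
      ring
  · -- Markov chain X - Z - V
    refine condIndep_of_factor _ _ _ _
      (fun x z => p (x, z))
      (fun vv z => (∑ η : {j : Fin n // j ≠ vv.2.2} → 𝒳 × 𝒵,
        ind (g (crec Prod.snd vv.2.2 z η) = vv.1
          ∧ truncF (vv.2.2 : ℕ) (crec Prod.snd vv.2.2 z η) = vv.2.1)
        * ∏ j : {j : Fin n // j ≠ vv.2.2}, p (η j)) / n) ?_
    rintro x ⟨m2, t, i0⟩ z
    dsimp only
    have hcomp : pmap (fun a : (Fin M1 × (Fin n → Option 𝒳) × Fin n) × 𝒳 × 𝒵 ×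
          (Fin M2 × (Fin n → Option 𝒵) × Fin n) => (a.2.1, a.2.2.2, a.2.2.1))
        (pmap (BIGmap n M1 M2 f g) (Pmix n p))
        = pmap (fun w : (Fin n → 𝒳 × 𝒵) × Fin n =>
            ((w.1 w.2).1,
              (g (fun j => (w.1 j).2), truncF (w.2 : ℕ) (fun j => (w.1 j).2), w.2),
              (w.1 w.2).2)) (Pmix n p) :=
      pmap_comp (Pmix n p) (BIGmap n M1 M2 f g) _
    rw [hcomp]
    simp only [pmap, Pmix]
    rw [Fintype.sum_prod_type, Finset.sum_comm]
    refine (Finset.sum_eq_single i0 ?_ ?_).trans ?_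
    · intro i _ hi
      refine Finset.sum_eq_zero fun ω _ => if_neg fun hcon => hi ?_
      exact congrArg (fun y : 𝒳 × (Fin M2 × (Fin n → Option 𝒵) × Fin n) × 𝒵 => y.2.1.2.2) hcon
    · intro hmem
      exact absurd (Finset.mem_univ i0) hmem
    · have e1 : ∀ ω : Fin n → 𝒳 × 𝒵,
          (if ((ω i0).1, (g (fun j => (ω j).2), truncF (i0 : ℕ) (fun j => (ω j).2), i0), (ω i0).2)
              = (x, (m2, t, i0), z) then iid n p ω / (n:ℝ) else 0)
          = (ind ((fun ξ : Fin n → 𝒵 => g ξ = m2 ∧ truncF (i0 : ℕ) ξ = t)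
                (fun j => Prod.snd (ω j)) ∧ ω i0 = (x, z)) * ∏ j, p (ω j)) / n := by
        intro ω
        have hiff : (((ω i0).1, (g (fun j => (ω j).2), truncF (i0 : ℕ) (fun j => (ω j).2), i0),
              (ω i0).2) = (x, (m2, t, i0), z))
            ↔ ((g (fun j => (ω j).2) = m2 ∧ truncF (i0 : ℕ) (fun j => (ω j).2) = t)
                ∧ ω i0 = (x, z)) := by
          simp only [Prod.ext_iff]
          constructor
          · rintro ⟨h1, ⟨h2, h3, _⟩, h4⟩; exact ⟨⟨h2, h3⟩, h1, h4⟩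
          · rintro ⟨⟨h2, h3⟩, h1, h4⟩; exact ⟨h1, ⟨h2, h3, trivial⟩, h4⟩
        by_cases h : (g (fun j => (ω j).2) = m2 ∧ truncF (i0 : ℕ) (fun j => (ω j).2) = t)
            ∧ ω i0 = (x, z)
        · rw [if_pos (hiff.mpr h)]
          simp only [ind]
          rw [if_pos h, one_mul]
          rfl
        · rw [if_neg (fun hcon => h (hiff.mp hcon))]
          simp only [ind]
          rw [if_neg h, zero_mul, zero_div]
      refine (Finset.sum_congr rfl fun ω _ => ?_).trans
        (?_ : ∑ ω : Fin n → 𝒳 × 𝒵, (ind ((fun ξ : Fin n → 𝒵 => g ξ = m2 ∧ truncF (i0 : ℕ) ξ = t)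
          (fun j => Prod.snd (ω j)) ∧ ω i0 = (x, z)) * ∏ j, p (ω j)) / n = _)
      · convert e1 ω using 2
      rw [← Finset.sum_div,
        core p i0 Prod.snd (fun ξ : Fin n → 𝒵 => g ξ = m2 ∧ truncF (i0 : ℕ) ξ = t) (x, z) z rfl]
      ring
  · -- rate bound R1
    rw [hMIU, div_le_iff₀ hn0]
    have hle : Hof (iid n p) (fun ω : Fin n → 𝒳 × 𝒵 => f (fun j => (ω j).1)) ≤ Real.log M1 := by
      have h := ent_le_log_card (isPMF_pmap hP0 (fun ω : Fin n → 𝒳 × 𝒵 => f (fun j => (ω j).1)))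
      rwa [Fintype.card_fin] at h
    calc Hof (iid n p) (fun ω : Fin n → 𝒳 × 𝒵 => f (fun j => (ω j).1))
        ≤ Real.log M1 := hle
      _ ≤ n * R1 := hM1
      _ = R1 * n := mul_comm _ _
  · -- rate bound R2
    rw [hMIV, div_le_iff₀ hn0]
    have hle : Hof (iid n p) (fun ω : Fin n → 𝒳 × 𝒵 => g (fun j => (ω j).2)) ≤ Real.log M2 := by
      have h := ent_le_log_card (isPMF_pmap hP0 (fun ω : Fin n → 𝒳 × 𝒵 => g (fun j => (ω j).2)))
      rwa [Fintype.card_fin] at h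
    calc Hof (iid n p) (fun ω : Fin n → 𝒳 × 𝒵 => g (fun j => (ω j).2))
        ≤ Real.log M2 := hle
      _ ≤ n * R2 := hM2
      _ = R2 * n := mul_comm _ _
  · -- the information bound
    rw [hMIU, hMIV, hMIUV]
    unfold MI at hμ
    have hμ' : μ ≤ (Hof (iid n p) (fun ω : Fin n → 𝒳 × 𝒵 => f (fun j => (ω j).1))
        + Hof (iid n p) (fun ω : Fin n → 𝒳 × 𝒵 => g (fun j => (ω j).2))
        - Hof (iid n p) (fun ω : Fin n → 𝒳 × 𝒵 =>
            (f (fun j => (ω j).1), g (fun j => (ω j).2)))) / n := hμ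
    have harith : (Hof (iid n p) (fun ω : Fin n → 𝒳 × 𝒵 => f (fun j => (ω j).1))
        + Hof (iid n p) (fun ω : Fin n → 𝒳 × 𝒵 => g (fun j => (ω j).2))
        - Hof (iid n p) (fun ω : Fin n → 𝒳 × 𝒵 =>
            (f (fun j => (ω j).1), g (fun j => (ω j).2)))) / n
        = Hof (iid n p) (fun ω : Fin n → 𝒳 × 𝒵 => f (fun j => (ω j).1)) / n
        + Hof (iid n p) (fun ω : Fin n → 𝒳 × 𝒵 => g (fun j => (ω j).2)) / n
        - Hof (iid n p) (fun ω : Fin n → 𝒳 × 𝒵 =>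
            (f (fun j => (ω j).1), g (fun j => (ω j).2))) / n := by
      ring
    linarith [hμ', harith]


end Biclustering
end

section
/- For all α ∈ (0, 1/2) and p ∈ (0, 1/2), (log 2 − h_b(α∗p)) / (log 2 − h_b(p)) > 1 − h_b(α)/log 2; equivalently, log 2 · (log 2 − h_b(α∗p)) > (log 2 − h_b(p)) · (log 2 − h_b(α)). -/
open Real Filter Finset Topology

set_option maxHeartbeats 1000000

namespace Biclustering

/-- The binary entropy function (natural logarithm). -/
noncomputable def hb (t : ℝ) : ℝ := -(t * Real.log t) - (1 - t) * Real.log (1 - t)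

/-- Binary convolution `a ∗ b = a(1−b) + (1−a)b`. -/
def bstar (a b : ℝ) : ℝ := a * (1 - b) + (1 - a) * b

/-- The coefficients of the power series of `log 2 - hb ((1-x)/2)`. -/
noncomputable def cseq (k : ℕ) : ℝ := 1 / ((2 * k + 1) * (2 * k + 2))

lemma cseq_pos (k : ℕ) : 0 < cseq k := by
  unfold cseq; positivity

/-- Power series expansion. -/
lemma hasSum_series {x : ℝ} (hx : |x| < 1) :
    HasSum (fun k : ℕ => cseq k * x ^ (2 * k + 2))
      ((1 + x) / 2 * Real.log (1 + x) + (1 - x) / 2 * Real.log (1 - x)) := by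
  have hxlt : x < 1 := lt_of_abs_lt hx
  have hxgt : -1 < x := neg_lt_of_abs_lt hx
  have h1x : (0:ℝ) < 1 - x := by linarith
  have h1x' : (0:ℝ) < 1 + x := by linarith
  have h1 := (Real.hasSum_log_sub_log_of_abs_lt_one hx).mul_left (x / 2)
  have hx2 : |x ^ 2| < 1 := by
    rw [abs_pow]
    calc |x| ^ 2 ≤ |x| ^ 1 := pow_le_pow_of_le_one (abs_nonneg x) hx.le (by norm_num)
    _ < 1 := by simpa using hx
  have h2 := (Real.hasSum_pow_div_log_of_abs_lt_one hx2).mul_left (1/2)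
  have h := h1.sub h2
  have hfun : (fun k : ℕ => x / 2 * (2 * (1 / (2 * (k:ℝ) + 1)) * x ^ (2 * k + 1))
      - 1/2 * ((x ^ 2) ^ (k + 1) / ((k:ℝ) + 1)))
      = fun k : ℕ => cseq k * x ^ (2 * k + 2) := by
    funext k
    have hp : (x ^ 2) ^ (k + 1) = x ^ (2 * k + 2) := by
      ring
    have e1 : (2 * (k:ℝ) + 1) ≠ 0 := by positivity
    have e2 : ((k:ℝ) + 1) ≠ 0 := by positivity
    rw [hp]
    unfold cseq
    have hxp : x ^ (2 * k + 2) = x ^ (2 * k + 1) * x := by rw [pow_succ]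
    rw [hxp]
    field_simp
    ring
  have hval : x / 2 * (Real.log (1 + x) - Real.log (1 - x)) - 1/2 * (-Real.log (1 - x ^ 2))
      = (1 + x) / 2 * Real.log (1 + x) + (1 - x) / 2 * Real.log (1 - x) := by
    have : Real.log (1 - x ^ 2) = Real.log (1 - x) + Real.log (1 + x) := by
      rw [show (1 : ℝ) - x ^ 2 = (1 - x) * (1 + x) by ring,
        Real.log_mul h1x.ne' h1x'.ne']
    rw [this]; ring
  rw [hfun, hval] at h
  exact h

/-- Series representation of `log 2 - hb t` for `t ∈ (0, 1/2)`. -/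
lemma hasSum_hb {t : ℝ} (h0 : 0 < t) (h1 : t < 1/2) :
    HasSum (fun k : ℕ => cseq k * (1 - 2 * t) ^ (2 * k + 2)) (Real.log 2 - hb t) := by
  have hx : |1 - 2 * t| < 1 := abs_lt.2 ⟨by linarith, by linarith⟩
  have h := hasSum_series hx
  have hval : (1 + (1 - 2 * t)) / 2 * Real.log (1 + (1 - 2 * t))
      + (1 - (1 - 2 * t)) / 2 * Real.log (1 - (1 - 2 * t)) = Real.log 2 - hb t := by
    have e1 : (1 : ℝ) + (1 - 2 * t) = 2 * (1 - t) := by ring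
    have e2 : (1 : ℝ) - (1 - 2 * t) = 2 * t := by ring
    rw [e1, e2, Real.log_mul (by norm_num) (by linarith), Real.log_mul (by norm_num) h0.ne']
    unfold hb
    ring
  rw [hval] at h
  exact h

/-- Real-valued harmonic partial sums. -/
noncomputable def hseq (n : ℕ) : ℝ := ∑ i ∈ Finset.range n, (1 : ℝ) / (i + 1)

lemma hseq_succ (n : ℕ) : hseq (n + 1) = hseq n + 1 / ((n:ℝ) + 1) :=
  Finset.sum_range_succ _ _

lemma partial_sum_cseq (n : ℕ) : ∑ k ∈ Finset.range n, cseq k = hseq (2 * n) - hseq n := by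
  induction n with
  | zero => simp [hseq]
  | succ n ih =>
    have h2 : 2 * (n + 1) = (2 * n + 1) + 1 := by ring
    rw [Finset.sum_range_succ, ih, h2, hseq_succ, hseq_succ, hseq_succ]
    unfold cseq
    have e1 : (2 * (n:ℝ) + 1) ≠ 0 := by positivity
    have e2 : (2 * (n:ℝ) + 2) ≠ 0 := by positivity
    have e3 : ((n:ℝ) + 1) ≠ 0 := by positivity
    push_cast
    field_simp
    ring

lemma hseq_eq_harmonic (n : ℕ) : hseq n = (harmonic n : ℝ) := by
  unfold hseq harmonic
  push_cast
  simp [one_div]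

lemma tendsto_hseq_sub : Tendsto (fun n : ℕ => hseq (2 * n) - hseq n) atTop (𝓝 (Real.log 2)) := by
  have h1 : Tendsto (fun n : ℕ => (harmonic n : ℝ) - Real.log ((n:ℝ) + 1)) atTop
      (𝓝 Real.eulerMascheroniConstant) := Real.tendsto_harmonic_sub_log_add_one
  have hmono : Tendsto (fun n : ℕ => 2 * n) atTop atTop :=
    tendsto_atTop_mono (fun n => Nat.le_mul_of_pos_left n two_pos) tendsto_id
  have h2 : Tendsto (fun n : ℕ => (harmonic (2 * n) : ℝ) - Real.log ((2 * (n:ℝ)) + 1)) atTop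
      (𝓝 Real.eulerMascheroniConstant) := by
    have := h1.comp hmono
    refine this.congr fun n => ?_
    simp only [Function.comp]
    push_cast
    ring_nf
  have h3 : Tendsto (fun n : ℕ => Real.log ((2 * (n:ℝ) + 1) / ((n:ℝ) + 1))) atTop
      (𝓝 (Real.log 2)) := by
    have hq : Tendsto (fun n : ℕ => (2 * (n:ℝ) + 1) / ((n:ℝ) + 1)) atTop (𝓝 2) := by
      have heq : ∀ n : ℕ, (2 * (n:ℝ) + 1) / ((n:ℝ) + 1) = 2 - 1 / ((n:ℝ) + 1) := by
        intro n
        have : ((n:ℝ) + 1) ≠ 0 := by positivity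
        field_simp
        ring
      have hz : Tendsto (fun n : ℕ => (2:ℝ) - 1 / ((n:ℝ) + 1)) atTop (𝓝 2) := by
        simpa using tendsto_const_nhds.sub (tendsto_one_div_add_atTop_nhds_zero_nat : Tendsto (fun n : ℕ => 1 / ((n : ℝ) + 1)) atTop (𝓝 0))
      exact hz.congr fun n => (heq n).symm
    exact ((Real.continuousAt_log (by norm_num)).tendsto.comp hq)
  have h4 : Tendsto (fun n : ℕ => Real.log (2 * (n:ℝ) + 1) - Real.log ((n:ℝ) + 1)) atTop
      (𝓝 (Real.log 2)) := by
    refine h3.congr fun n => ?_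
    rw [Real.log_div (by positivity) (by positivity)]
  have hcomb := (h2.sub h1).add h4
  rw [sub_self, zero_add] at hcomb
  refine hcomb.congr fun n => ?_
  rw [hseq_eq_harmonic, hseq_eq_harmonic]
  ring

lemma hasSum_cseq : HasSum cseq (Real.log 2) := by
  rw [hasSum_iff_tendsto_nat_of_nonneg (fun k => (cseq_pos k).le)]
  exact tendsto_hseq_sub.congr fun n => (partial_sum_cseq n).symm

/-- The strict Chebyshev-type inequality between the series. -/
lemma cheb {x y : ℝ} (hx0 : 0 < x) (hx1 : x < 1) (hy0 : 0 < y) (hy1 : y < 1)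
    {A B D : ℝ}
    (hA : HasSum (fun k : ℕ => cseq k * x ^ (2 * k + 2)) A)
    (hB : HasSum (fun k : ℕ => cseq k * y ^ (2 * k + 2)) B)
    (hD : HasSum (fun k : ℕ => cseq k * (x * y) ^ (2 * k + 2)) D) :
    A * B < Real.log 2 * D := by
  have hC := hasSum_cseq
  have hsum1 : Summable (fun jk : ℕ × ℕ => cseq jk.1 * (cseq jk.2 * (x * y) ^ (2 * jk.2 + 2))) := by
    refine Summable.mul_of_nonneg hC.summable hD.summable ?_ ?_
    · intro k; exact (cseq_pos k).le
    · intro k; exact mul_nonneg (cseq_pos k).le (by positivity)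
  have hCD : HasSum (fun jk : ℕ × ℕ => cseq jk.1 * (cseq jk.2 * (x * y) ^ (2 * jk.2 + 2)))
      (Real.log 2 * D) :=
    HasSum.mul (f := cseq) (g := fun k : ℕ => cseq k * (x * y) ^ (2 * k + 2)) hC hD hsum1
  have hsum2 : Summable (fun jk : ℕ × ℕ =>
      (cseq jk.1 * x ^ (2 * jk.1 + 2)) * (cseq jk.2 * y ^ (2 * jk.2 + 2))) := by
    refine Summable.mul_of_nonneg hA.summable hB.summable ?_ ?_
    · intro k; exact mul_nonneg (cseq_pos k).le (by positivity)
    · intro k; exact mul_nonneg (cseq_pos k).le (by positivity)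
  have hAB : HasSum (fun jk : ℕ × ℕ =>
      (cseq jk.1 * x ^ (2 * jk.1 + 2)) * (cseq jk.2 * y ^ (2 * jk.2 + 2))) (A * B) :=
    HasSum.mul (f := fun k : ℕ => cseq k * x ^ (2 * k + 2))
      (g := fun k : ℕ => cseq k * y ^ (2 * k + 2)) hA hB hsum2
  set T : ℕ × ℕ → ℝ := fun jk =>
    cseq jk.1 * (cseq jk.2 * (x * y) ^ (2 * jk.2 + 2))
      - (cseq jk.1 * x ^ (2 * jk.1 + 2)) * (cseq jk.2 * y ^ (2 * jk.2 + 2)) with hTdef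
  have hT : HasSum T (Real.log 2 * D - A * B) := hCD.sub hAB
  have hT' : HasSum (T ∘ (Equiv.prodComm ℕ ℕ)) (Real.log 2 * D - A * B) :=
    (Equiv.prodComm ℕ ℕ).hasSum_iff.mpr hT
  have hS : HasSum (fun jk : ℕ × ℕ => T jk + T (jk.2, jk.1))
      ((Real.log 2 * D - A * B) + (Real.log 2 * D - A * B)) := hT.add hT'
  have hSfun : ∀ jk : ℕ × ℕ, T jk + T (jk.2, jk.1)
      = cseq jk.1 * cseq jk.2 *
        ((x ^ (2 * jk.2 + 2) - x ^ (2 * jk.1 + 2)) * (y ^ (2 * jk.2 + 2) - y ^ (2 * jk.1 + 2))) := by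
    rintro ⟨j, k⟩
    simp only [hTdef, mul_pow]
    ring
  have hnonneg : ∀ jk : ℕ × ℕ, 0 ≤ T jk + T (jk.2, jk.1) := by
    rintro ⟨j, k⟩
    rw [hSfun ⟨j, k⟩]
    rcases le_total j k with hle | hle
    · have hxm : x ^ (2 * k + 2) ≤ x ^ (2 * j + 2) :=
        pow_le_pow_of_le_one hx0.le hx1.le (by omega)
      have hym : y ^ (2 * k + 2) ≤ y ^ (2 * j + 2) :=
        pow_le_pow_of_le_one hy0.le hy1.le (by omega)
      have hprod : 0 ≤ (x ^ (2 * k + 2) - x ^ (2 * j + 2)) * (y ^ (2 * k + 2) - y ^ (2 * j + 2)) := by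
        nlinarith [hxm, hym]
      exact mul_nonneg (mul_nonneg (cseq_pos _).le (cseq_pos _).le) hprod
    · have hxm : x ^ (2 * j + 2) ≤ x ^ (2 * k + 2) :=
        pow_le_pow_of_le_one hx0.le hx1.le (by omega)
      have hym : y ^ (2 * j + 2) ≤ y ^ (2 * k + 2) :=
        pow_le_pow_of_le_one hy0.le hy1.le (by omega)
      have hprod : 0 ≤ (x ^ (2 * k + 2) - x ^ (2 * j + 2)) * (y ^ (2 * k + 2) - y ^ (2 * j + 2)) :=
        mul_nonneg (by linarith) (by linarith)
      exact mul_nonneg (mul_nonneg (cseq_pos _).le (cseq_pos _).le) hprod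
  have hpos : 0 < T ((0 : ℕ), (1 : ℕ)) + T ((1 : ℕ), (0 : ℕ)) := by
    rw [hSfun ⟨0, 1⟩]
    have hx' : x ^ (2 * 1 + 2) < x ^ (2 * 0 + 2) :=
      pow_lt_pow_right_of_lt_one₀ hx0 hx1 (by norm_num)
    have hy' : y ^ (2 * 1 + 2) < y ^ (2 * 0 + 2) :=
      pow_lt_pow_right_of_lt_one₀ hy0 hy1 (by norm_num)
    have := mul_pos_of_neg_of_neg (by linarith : x ^ (2 * 1 + 2) - x ^ (2 * 0 + 2) < 0)
      (by linarith : y ^ (2 * 1 + 2) - y ^ (2 * 0 + 2) < 0)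
    exact mul_pos (mul_pos (cseq_pos 0) (cseq_pos 1)) this
  have hle := le_hasSum hS ((0 : ℕ), (1 : ℕ)) (fun j _ => hnonneg j)
  simp only at hle
  linarith [hpos.trans_le hle]

/-- For all `α, p ∈ (0, 1/2)`,
`(log 2 − h_b(α∗p)) / (log 2 − h_b(p)) > 1 − h_b(α)/log 2`; equivalently,
`log 2 · (log 2 − h_b(α∗p)) > (log 2 − h_b(p)) · (log 2 − h_b(α))`. -/
theorem binary_entropy_inequality
    (α p : ℝ) (hα0 : 0 < α) (hα1 : α < 1 / 2) (hp0 : 0 < p) (hp1 : p < 1 / 2) :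
    (Real.log 2 - hb (bstar α p)) / (Real.log 2 - hb p) > 1 - hb α / Real.log 2 ∧
    Real.log 2 * (Real.log 2 - hb (bstar α p))
      > (Real.log 2 - hb p) * (Real.log 2 - hb α) := by
  have hx0 : 0 < 1 - 2 * α := by linarith
  have hx1 : 1 - 2 * α < 1 := by linarith
  have hy0 : 0 < 1 - 2 * p := by linarith
  have hy1 : 1 - 2 * p < 1 := by linarith
  have hA := hasSum_hb hα0 hα1
  have hB := hasSum_hb hp0 hp1
  have hb0 : 0 < bstar α p := by
    unfold bstar
    have := mul_pos hα0 (by linarith : (0:ℝ) < 1 - p)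
    have := mul_pos (by linarith : (0:ℝ) < 1 - α) hp0
    linarith
  have hb1 : bstar α p < 1 / 2 := by
    have := mul_pos hx0 hy0
    unfold bstar
    nlinarith
  have hD := hasSum_hb hb0 hb1
  have hbs : 1 - 2 * bstar α p = (1 - 2 * α) * (1 - 2 * p) := by
    unfold bstar; ring
  rw [hbs] at hD
  have key := cheb hx0 hx1 hy0 hy1 hA hB hD
  have hlog : 0 < Real.log 2 := Real.log_pos one_lt_two
  have hBpos : 0 < Real.log 2 - hb p := by
    have hterm : cseq 0 * (1 - 2 * p) ^ (2 * 0 + 2) ≤ Real.log 2 - hb p :=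
      le_hasSum hB 0 (fun j _ => mul_nonneg (cseq_pos j).le (pow_nonneg hy0.le _))
    have : 0 < cseq 0 * (1 - 2 * p) ^ (2 * 0 + 2) := by
      have := cseq_pos 0
      positivity
    linarith
  constructor
  · rw [gt_iff_lt, show 1 - hb α / Real.log 2 = (Real.log 2 - hb α) / Real.log 2 by
      field_simp, div_lt_div_iff₀ hlog hBpos]
    linear_combination key
  · linear_combination key

end Biclustering
end
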